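/- For all X, Y ∈ W, the matrix N⁻(X,Y) + 4·(X·Y − Y·X) commutes with R, where N⁻(X,Y) := ⁅Ĵ⁻X, Ĵ⁻Y⁆ − Ĵ⁻⁅Ĵ⁻X, Y⁆ − Ĵ⁻⁅X, Ĵ⁻Y⁆ + Ĵ⁻(Ĵ⁻⁅X,Y⁆) and ⁅X,Y⁆ = X·Y − Y·X. (This expresses that the Nijenhuis torsion of the invariant almost complex structure j⁻ equals −4 times the bracket modulo the fixed-point subalgebra.) -/
import Mathlib


open Matrix

/-- The standard complex structure matrix `J = [[0, -Id_n],[Id_n, 0]]`. -/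
noncomputable def Jmat (n : ℕ) : Matrix (Fin n ⊕ Fin n) (Fin n ⊕ Fin n) ℝ :=
  Matrix.fromBlocks 0 (-1) 1 0

/-- The matrix `R = [[Id_k, 0],[0, J]]` with block sizes `k` and `2n`. -/
noncomputable def Rmat (k n : ℕ) :
    Matrix (Fin k ⊕ (Fin n ⊕ Fin n)) (Fin k ⊕ (Fin n ⊕ Fin n)) ℝ :=
  Matrix.fromBlocks 1 0 0 (Jmat n)

/-- The subspace `W = 𝔤₋₁^σ ⊕ 𝔭` : matrices `[[0,B],[B',C]]` with `CJ + JC = 0`. -/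
def Wset (k n : ℕ) : Set (Matrix (Fin k ⊕ (Fin n ⊕ Fin n)) (Fin k ⊕ (Fin n ⊕ Fin n)) ℝ) :=
  {X | ∃ (B : Matrix (Fin k) (Fin n ⊕ Fin n) ℝ) (B' : Matrix (Fin n ⊕ Fin n) (Fin k) ℝ)
    (C : Matrix (Fin n ⊕ Fin n) (Fin n ⊕ Fin n) ℝ),
    C * Jmat n + Jmat n * C = 0 ∧ X = Matrix.fromBlocks 0 B B' C}

/-- The map `Ĵ⁻ : [[A,B],[B',C]] ↦ [[0, −B·J],[J·B', −(J·C − C·J)/2]]`. -/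
noncomputable def JhatMinus (k n : ℕ)
    (X : Matrix (Fin k ⊕ (Fin n ⊕ Fin n)) (Fin k ⊕ (Fin n ⊕ Fin n)) ℝ) :
    Matrix (Fin k ⊕ (Fin n ⊕ Fin n)) (Fin k ⊕ (Fin n ⊕ Fin n)) ℝ :=
  Matrix.fromBlocks 0 (-(X.toBlocks₁₂ * Jmat n)) (Jmat n * X.toBlocks₂₁)
    (-((1 / 2 : ℝ) • (Jmat n * X.toBlocks₂₂ - X.toBlocks₂₂ * Jmat n)))

/-- The Nijenhuis-type expression `N⁻(X,Y)` built from `Ĵ⁻`. -/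
noncomputable def NMinus (k n : ℕ)
    (X Y : Matrix (Fin k ⊕ (Fin n ⊕ Fin n)) (Fin k ⊕ (Fin n ⊕ Fin n)) ℝ) :
    Matrix (Fin k ⊕ (Fin n ⊕ Fin n)) (Fin k ⊕ (Fin n ⊕ Fin n)) ℝ :=
  (JhatMinus k n X * JhatMinus k n Y - JhatMinus k n Y * JhatMinus k n X)
    - JhatMinus k n (JhatMinus k n X * Y - Y * JhatMinus k n X)
    - JhatMinus k n (X * JhatMinus k n Y - JhatMinus k n Y * X)
    + JhatMinus k n (JhatMinus k n (X * Y - Y * X))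

set_option maxHeartbeats 2000000 in
theorem jMinus_nijenhuis (k n : ℕ) (hk : 0 < k) (hn : 0 < n)
    (X Y : Matrix (Fin k ⊕ (Fin n ⊕ Fin n)) (Fin k ⊕ (Fin n ⊕ Fin n)) ℝ)
    (hX : X ∈ Wset k n) (hY : Y ∈ Wset k n) :
    (NMinus k n X Y + (4 : ℝ) • (X * Y - Y * X)) * Rmat k n =
      Rmat k n * (NMinus k n X Y + (4 : ℝ) • (X * Y - Y * X)) := by
  obtain ⟨B, B', C, hC, rfl⟩ := hX
  obtain ⟨D, D', E, hE, rfl⟩ := hY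
  have hJJ : Jmat n * Jmat n = -1 := by
    have h1 : (-1 : Matrix (Fin n ⊕ Fin n) (Fin n ⊕ Fin n) ℝ)
        = Matrix.fromBlocks (-1) (-0) (-0) (-1) := by
      rw [← Matrix.fromBlocks_neg, ← Matrix.fromBlocks_one]
    simp [Jmat, Matrix.fromBlocks_multiply, h1]
  have hJC : Jmat n * C = -(C * Jmat n) := by
    have := hC
    rw [add_comm] at this
    exact eq_neg_of_add_eq_zero_left this
  have hJE : Jmat n * E = -(E * Jmat n) := by
    rw [add_comm] at hE
    exact eq_neg_of_add_eq_zero_left hE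
  have hJJ' : ∀ x : Matrix (Fin n ⊕ Fin n) (Fin n ⊕ Fin n) ℝ, Jmat n * (Jmat n * x) = -x := by
    intro x; rw [← mul_assoc, hJJ, neg_one_mul]
  have hJC' : ∀ x : Matrix (Fin n ⊕ Fin n) (Fin n ⊕ Fin n) ℝ,
      Jmat n * (C * x) = -(C * (Jmat n * x)) := by
    intro x; rw [← mul_assoc, hJC, neg_mul, mul_assoc]
  have hJE' : ∀ x : Matrix (Fin n ⊕ Fin n) (Fin n ⊕ Fin n) ℝ,
      Jmat n * (E * x) = -(E * (Jmat n * x)) := by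
    intro x; rw [← mul_assoc, hJE, neg_mul, mul_assoc]
  have hJJ'' : ∀ x : Matrix (Fin n ⊕ Fin n) (Fin k) ℝ, Jmat n * (Jmat n * x) = -x := by
    intro x; rw [← Matrix.mul_assoc, hJJ]; simp
  have hJC'' : ∀ x : Matrix (Fin n ⊕ Fin n) (Fin k) ℝ,
      Jmat n * (C * x) = -(C * (Jmat n * x)) := by
    intro x; rw [← Matrix.mul_assoc, hJC, Matrix.neg_mul, Matrix.mul_assoc]
  have hJE'' : ∀ x : Matrix (Fin n ⊕ Fin n) (Fin k) ℝ,
      Jmat n * (E * x) = -(E * (Jmat n * x)) := by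
    intro x; rw [← Matrix.mul_assoc, hJE, Matrix.neg_mul, Matrix.mul_assoc]
  simp only [NMinus, JhatMinus, Rmat, sub_eq_add_neg, Matrix.fromBlocks_multiply,
    Matrix.fromBlocks_add, Matrix.fromBlocks_neg, Matrix.fromBlocks_smul,
    Matrix.toBlocks_fromBlocks₁₁, Matrix.toBlocks_fromBlocks₁₂,
    Matrix.toBlocks_fromBlocks₂₁, Matrix.toBlocks_fromBlocks₂₂]
  rw [Matrix.fromBlocks_inj]
  refine ⟨?_, ?_, ?_, ?_⟩ <;>
  · simp only [Matrix.mul_add, Matrix.add_mul, Matrix.mul_neg, Matrix.neg_mul, Matrix.mul_assoc,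
      Matrix.mul_smul, Matrix.smul_mul, Matrix.mul_zero, Matrix.zero_mul, Matrix.mul_one,
      Matrix.one_mul, smul_add, smul_neg, smul_smul, neg_neg, neg_add, add_zero, zero_add,
      neg_zero, hJJ, hJC, hJE, hJJ', hJC', hJE', hJJ'', hJC'', hJE'']
    module
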